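/- Let ε > 0, k ∈ ℕ, and set t := ε/(2k+1) and λ := (ε/2)·(e^t + 1)/(e^t − 1). Then λ > ε/2, (1/ε)·∫₀^ε ( k/(λ + ε/2 − x) + (k+1)/(λ − ε/2 + x) ) dx = 1, and λ > 2k + 1. -/

import Mathlib

open Real

lemma sinh_lt_mul_cosh {x : ℝ} (hx : 0 < x) : Real.sinh x < x * Real.cosh x := by
  have h : StrictMonoOn (fun y : ℝ => y * Real.cosh y - Real.sinh y) (Set.Ici 0) := by
    apply strictMonoOn_of_deriv_pos (convex_Ici _)
    · exact ((continuous_id.mul Real.continuous_cosh).sub Real.continuous_sinh).continuousOn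
    · intro y hy
      rw [interior_Ici, Set.mem_Ioi] at hy
      have hd : HasDerivAt (fun y : ℝ => y * Real.cosh y - Real.sinh y)
          (1 * Real.cosh y + y * Real.sinh y - Real.cosh y) y :=
        ((hasDerivAt_id y).mul (Real.hasDerivAt_cosh y)).sub (Real.hasDerivAt_sinh y)
      rw [hd.deriv]
      have h1 : 0 < Real.sinh y := Real.sinh_pos_iff.mpr hy
      nlinarith
  have := h Set.self_mem_Ici (Set.mem_Ici.mpr hx.le) hx
  simp only [Real.cosh_zero, Real.sinh_zero, mul_zero, zero_mul, sub_zero] at this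
  linarith

theorem stmt_15 (ε : ℝ) (k : ℕ) (hε : 0 < ε)
    (t lam : ℝ) (ht : t = ε / (2 * k + 1))
    (hlam : lam = (ε / 2) * (Real.exp t + 1) / (Real.exp t - 1)) :
    ε / 2 < lam ∧
    (1 / ε) * ∫ x in (0 : ℝ)..ε,
      (k / (lam + ε / 2 - x) + (k + 1) / (lam - ε / 2 + x)) = 1 ∧
    2 * k + 1 < lam := by
  have hk1 : (0:ℝ) < 2 * k + 1 := by positivity
  have ht0 : 0 < t := by rw [ht]; positivity
  have hE : 1 < Real.exp t := by
    rw [← Real.exp_zero]; exact Real.exp_lt_exp.mpr ht0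
  have hE1 : 0 < Real.exp t - 1 := by linarith
  have htε : ε = (2 * k + 1) * t := by rw [ht]; field_simp
  have hlm : lam - ε / 2 = ε / (Real.exp t - 1) := by
    rw [hlam]; field_simp; ring
  have hlp : lam + ε / 2 = ε * Real.exp t / (Real.exp t - 1) := by
    rw [hlam]; field_simp; ring
  have h1 : 0 < lam - ε / 2 := by rw [hlm]; positivity
  have h2 : 0 < lam + ε / 2 := by linarith
  have hEq : lam + ε / 2 = Real.exp t * (lam - ε / 2) := by
    rw [hlm, hlp]; field_simp
  refine ⟨by linarith, ?_, ?_⟩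
  · -- the integral
    set F : ℝ → ℝ := fun x => (k + 1) * Real.log (lam - ε / 2 + x)
      - k * Real.log (lam + ε / 2 - x) with hF
    have hderiv : ∀ x ∈ Set.uIcc (0:ℝ) ε,
        HasDerivAt F ((k : ℝ) / (lam + ε / 2 - x) + (k + 1) / (lam - ε / 2 + x)) x := by
      intro x hx
      rw [Set.uIcc_of_le hε.le] at hx
      obtain ⟨hx0, hxε⟩ := hx
      have hp1 : 0 < lam - ε / 2 + x := by linarith
      have hp2 : 0 < lam + ε / 2 - x := by linarith
      have hd1 : HasDerivAt (fun x : ℝ => lam - ε / 2 + x) 1 x := by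
        simpa using (hasDerivAt_id x).const_add (lam - ε / 2)
      have hd2 : HasDerivAt (fun x : ℝ => lam + ε / 2 - x) (-1) x := by
        simpa using (hasDerivAt_id x).const_sub (lam + ε / 2)
      have hl1 : HasDerivAt (fun x : ℝ => Real.log (lam - ε / 2 + x))
          (1 / (lam - ε / 2 + x)) x := hd1.log hp1.ne'
      have hl2 : HasDerivAt (fun x : ℝ => Real.log (lam + ε / 2 - x))
          (-1 / (lam + ε / 2 - x)) x := hd2.log hp2.ne'
      have := (hl1.const_mul ((k:ℝ) + 1)).sub (hl2.const_mul (k:ℝ))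
      refine this.congr_deriv ?_
      ring
    have hint : IntervalIntegrable
        (fun x => (k : ℝ) / (lam + ε / 2 - x) + (k + 1) / (lam - ε / 2 + x))
        MeasureTheory.volume 0 ε := by
      apply ContinuousOn.intervalIntegrable
      apply ContinuousOn.add
      · apply ContinuousOn.div continuousOn_const
        · fun_prop
        · intro x hx
          rw [Set.uIcc_of_le hε.le] at hx
          have : 0 < lam + ε / 2 - x := by linarith [hx.2]
          exact this.ne'
      · apply ContinuousOn.div continuousOn_const
        · fun_prop
        · intro x hx
          rw [Set.uIcc_of_le hε.le] at hx
          have : 0 < lam - ε / 2 + x := by linarith [hx.1]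
          exact this.ne'
    rw [intervalIntegral.integral_eq_sub_of_hasDerivAt hderiv hint]
    have hlog : Real.log (lam + ε / 2) = t + Real.log (lam - ε / 2) := by
      rw [hEq, Real.log_mul (Real.exp_pos t).ne' h1.ne', Real.log_exp]
    have hsimp : F ε - F 0 = ε := by
      simp only [hF]
      have e1 : lam - ε / 2 + ε = lam + ε / 2 := by ring
      have e2 : lam + ε / 2 - ε = lam - ε / 2 := by ring
      rw [e1, e2, add_zero, sub_zero, hlog]
      rw [htε]; ring
    rw [hsimp]
    field_simp
  · -- lam > 2k+1
    set x := t / 2 with hx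
    have hx0 : 0 < x := by positivity
    have hkey := sinh_lt_mul_cosh hx0
    rw [Real.sinh_eq, Real.cosh_eq] at hkey
    have hex : Real.exp t = Real.exp x * Real.exp x := by
      rw [← Real.exp_add]; congr 1; rw [hx]; ring
    have hen : Real.exp (-x) = (Real.exp x)⁻¹ := Real.exp_neg x
    have hxp : 0 < Real.exp x := Real.exp_pos x
    -- get t * (exp t + 1) > 2 * (exp t - 1)
    have hmain : 2 * (Real.exp t - 1) < t * (Real.exp t + 1) := by
      rw [hex]
      have h2x : t = 2 * x := by rw [hx]; ring
      rw [h2x]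
      rw [hen] at hkey
      have hinv : Real.exp x * (Real.exp x)⁻¹ = 1 := mul_inv_cancel₀ hxp.ne'
      nlinarith [mul_pos hxp hxp]
    rw [hlam, htε, lt_div_iff₀ hE1]
    have := mul_lt_mul_of_pos_left hmain hk1
    nlinarith
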